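/- Let k be a commutative ring and λ, κ ∈ k. Let M = ⊕_{n≥0} k·e_n be the free k-module with basis (e_n)_{n≥0} (e.g. M = ℕ →₀ k with e_n the standard basis), and let S : M → M be the k-linear shift map S(e_n) = e_{n+1}. Suppose ⋄ : M × M → M is a k-bilinear operation satisfying e_0 ⋄ e_n = e_n = e_n ⋄ e_0 for all n ≥ 0, and the recursion e_m ⋄ e_n = S(e_{m-1} ⋄ e_n) + S(e_m ⋄ e_{n-1}) + λ S(e_{m-1} ⋄ e_{n-1}) + κ (e_{m-1} ⋄ e_{n-1}) for all m, n ≥ 1. Then for all m, n ≥ 0: e_m ⋄ e_n = ∑_{r=0}^{min(m,n)} ∑_{i=0}^{r} C(m+n-r, m)·C(m, r)·C(r, i)·λ^{r-i}·κ^{i}·e_{m+n-r-i}, where C(·,·) denotes the binomial coefficient. -/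

import Mathlib

open Finset

section QuasiShuffleAux

variable {k : Type*} [CommRing k]

private def cf (lam kap : k) (m n r i : ℕ) : k :=
  ((m + n - r).choose m : k) * (m.choose r : k) * (r.choose i : k) * lam ^ (r - i) * kap ^ i

private noncomputable def Ff (lam kap : k) (m n : ℕ) : ℕ →₀ k :=
  ∑ r ∈ range (m + 1), ∑ i ∈ range (r + 1),
    cf lam kap m n r i • Finsupp.single (m + n - r - i) (1 : k)

private noncomputable def Fsh (lam kap : k) (m n : ℕ) : ℕ →₀ k :=
  ∑ r ∈ range (m + 1), ∑ i ∈ range (r + 1),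
    cf lam kap m n r i • Finsupp.single (m + n - r - i + 1) (1 : k)

private lemma cf_zero₁ (lam kap : k) {m n r : ℕ} (i : ℕ) (h : (m + n - r).choose m = 0) :
    cf lam kap m n r i = 0 := by simp [cf, h]

private lemma cf_zero₂ (lam kap : k) {m r : ℕ} (n i : ℕ) (h : m.choose r = 0) :
    cf lam kap m n r i = 0 := by simp [cf, h]

private lemma cf_zero₃ (lam kap : k) {r i : ℕ} (m n : ℕ) (h : r.choose i = 0) :
    cf lam kap m n r i = 0 := by simp [cf, h]

private lemma min_sum (lam kap : k) (m n : ℕ) :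
    (∑ r ∈ Finset.range (min m n + 1), ∑ i ∈ Finset.range (r + 1),
          (((m + n - r).choose m : k) * (m.choose r : k) * (r.choose i : k)
            * lam ^ (r - i) * kap ^ i) • Finsupp.single (m + n - r - i) (1 : k))
      = Ff lam kap m n := by
  simp only [Ff, cf]
  apply Finset.sum_subset
  · intro x hx
    simp only [mem_range] at *
    omega
  · intro r hr hr'
    simp only [mem_range, not_lt] at hr hr'
    have h0 : (m + n - r).choose m = 0 := Nat.choose_eq_zero_of_lt (by omega)
    simp [h0]

private lemma S_Ff (lam kap : k) (S : (ℕ →₀ k) →ₗ[k] (ℕ →₀ k))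
    (hS : ∀ n : ℕ, S (Finsupp.single n 1) = Finsupp.single (n + 1) 1) (m n : ℕ) :
    S (Ff lam kap m n) = Fsh lam kap m n := by
  simp only [Ff, Fsh, map_sum, map_smul, hS]

private lemma Ff_zero_left (lam kap : k) (n : ℕ) : Ff lam kap 0 n = Finsupp.single n 1 := by
  simp only [Ff, cf, Finset.sum_range_one, Nat.sub_zero, Nat.choose_zero_right, Nat.choose_self,
    Nat.cast_one, mul_one, one_mul, pow_zero, zero_add, one_smul]

private lemma Ff_zero_right (lam kap : k) (m : ℕ) : Ff lam kap m 0 = Finsupp.single m 1 := by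
  rw [← min_sum lam kap m 0]
  simp only [Nat.min_zero, zero_add, Finset.sum_range_one, Nat.sub_zero, Nat.add_zero,
    Nat.choose_zero_right, Nat.choose_self, Nat.cast_one, mul_one, one_mul, pow_zero, one_smul]

private lemma coeff_id00 (lam kap : k) (m n : ℕ) :
    cf lam kap (m + 1) (n + 1) 0 0 = cf lam kap m (n + 1) 0 0 + cf lam kap (m + 1) n 0 0 := by
  simp only [cf, Nat.choose_zero_right, Nat.cast_one, mul_one, Nat.sub_zero, pow_zero]
  rw [show m + 1 + (n + 1) = (m + n + 1) + 1 by omega, show m + (n + 1) = m + n + 1 by omega,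
      show m + 1 + n = m + n + 1 by omega, Nat.choose_succ_succ (m + n + 1) m]
  push_cast
  ring

private lemma coeff_id0 (lam kap : k) (m n r : ℕ) (hr : r ≤ m) :
    cf lam kap (m + 1) (n + 1) (r + 1) 0
      = cf lam kap m (n + 1) (r + 1) 0 + cf lam kap (m + 1) n (r + 1) 0
        + lam * cf lam kap m n r 0 := by
  simp only [cf, Nat.choose_zero_right, Nat.cast_one, mul_one, Nat.sub_zero, pow_zero]
  rw [show m + 1 + (n + 1) - (r + 1) = (m + n - r) + 1 by omega,
      show m + (n + 1) - (r + 1) = m + n - r by omega,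
      show m + 1 + n - (r + 1) = m + n - r by omega,
      Nat.choose_succ_succ (m + n - r) m, Nat.choose_succ_succ m r]
  push_cast
  ring

private lemma coeff_id (lam kap : k) (m n r i : ℕ) (hr : r ≤ m) (hi : i ≤ r) :
    cf lam kap (m + 1) (n + 1) (r + 1) (i + 1)
      = cf lam kap m (n + 1) (r + 1) (i + 1) + cf lam kap (m + 1) n (r + 1) (i + 1)
        + lam * cf lam kap m n r (i + 1) + kap * cf lam kap m n r i := by
  have hlam : lam * cf lam kap m n r (i + 1)
      = ((m + n - r).choose m : k) * (m.choose r : k) * (r.choose (i + 1) : k)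
          * lam ^ (r - i) * kap ^ (i + 1) := by
    rcases Nat.lt_or_ge i r with h | h
    · simp only [cf]
      rw [show r - i = (r - (i + 1)) + 1 by omega]
      ring
    · have hir : i = r := le_antisymm hi h
      subst hir
      simp [cf, Nat.choose_succ_self]
  rw [hlam]
  simp only [cf, Nat.succ_sub_succ]
  rw [show m + 1 + (n + 1) - (r + 1) = (m + n - r) + 1 by omega,
      show m + (n + 1) - (r + 1) = m + n - r by omega,
      show m + 1 + n - (r + 1) = m + n - r by omega,
      Nat.choose_succ_succ (m + n - r) m, Nat.choose_succ_succ m r,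
      Nat.choose_succ_succ r i]
  push_cast
  ring

private lemma ha_term (lam kap : k) (m n r i : ℕ) (hr : r ≤ m) (hi : i ≤ r) :
    cf lam kap m (n + 1) (r + 1) (i + 1)
        • Finsupp.single (m + (n + 1) - (r + 1) - (i + 1) + 1) (1 : k)
      = cf lam kap m (n + 1) (r + 1) (i + 1) • Finsupp.single (m + n - r - i) (1 : k) := by
  rcases le_or_gt (i + r + 1) (m + n) with h | h
  · rw [show m + (n + 1) - (r + 1) - (i + 1) + 1 = m + n - r - i by omega]
  · have h0 : cf lam kap m (n + 1) (r + 1) (i + 1) = 0 := by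
      rcases le_or_gt (r + 1) m with h1 | h1
      · exact cf_zero₁ lam kap _ (Nat.choose_eq_zero_of_lt (by omega))
      · exact cf_zero₂ lam kap _ _ (Nat.choose_eq_zero_of_lt (by omega))
    rw [h0, zero_smul, zero_smul]

private lemma hb_term (lam kap : k) (m n r i : ℕ) (hr : r ≤ m) (hi : i ≤ r) :
    cf lam kap (m + 1) n (r + 1) (i + 1)
        • Finsupp.single (m + 1 + n - (r + 1) - (i + 1) + 1) (1 : k)
      = cf lam kap (m + 1) n (r + 1) (i + 1) • Finsupp.single (m + n - r - i) (1 : k) := by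
  rcases le_or_gt (i + r + 1) (m + n) with h | h
  · rw [show m + 1 + n - (r + 1) - (i + 1) + 1 = m + n - r - i by omega]
  · have h0 : cf lam kap (m + 1) n (r + 1) (i + 1) = 0 :=
      cf_zero₁ lam kap _ (Nat.choose_eq_zero_of_lt (by omega))
    rw [h0, zero_smul, zero_smul]

private lemma hc_term (lam kap : k) (m n r i : ℕ) (hr : r ≤ m) (hi : i ≤ r) :
    (lam * cf lam kap m n r (i + 1))
        • Finsupp.single (m + n - r - (i + 1) + 1) (1 : k)
      = (lam * cf lam kap m n r (i + 1)) • Finsupp.single (m + n - r - i) (1 : k) := by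
  rcases le_or_gt (i + r + 1) (m + n) with h | h
  · rw [show m + n - r - (i + 1) + 1 = m + n - r - i by omega]
  · have h0 : cf lam kap m n r (i + 1) = 0 := by
      rcases le_or_gt (i + 1) r with h1 | h1
      · exact cf_zero₁ lam kap _ (Nat.choose_eq_zero_of_lt (by omega))
      · exact cf_zero₃ lam kap _ _ (Nat.choose_eq_zero_of_lt (by omega))
    rw [h0, mul_zero, zero_smul, zero_smul]

private lemma assemble {M : Type*} [AddCommMonoid M] (m : ℕ) (L A B C D : ℕ → M)
    (h0 : L 0 = A 0 + B 0)
    (hs : ∀ r, r ≤ m → L (r + 1) = A (r + 1) + B (r + 1) + C r + D r) :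
    ∑ r ∈ range (m + 1 + 1), L r
      = ∑ r ∈ range (m + 1 + 1), A r + ∑ r ∈ range (m + 1 + 1), B r
        + ∑ r ∈ range (m + 1), C r + ∑ r ∈ range (m + 1), D r := by
  have h1 : ∑ r ∈ range (m + 1), L (r + 1)
      = ∑ r ∈ range (m + 1), (A (r + 1) + B (r + 1) + C r + D r) :=
    Finset.sum_congr rfl (fun r hr => hs r (Nat.lt_succ_iff.mp (mem_range.mp hr)))
  rw [Finset.sum_range_succ' L, Finset.sum_range_succ' A, Finset.sum_range_succ' B, h1, h0,
      Finset.sum_add_distrib, Finset.sum_add_distrib, Finset.sum_add_distrib]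
  abel

private lemma assemble2 {M : Type*} [AddCommMonoid M] (r : ℕ) (L A B C D : ℕ → M)
    (h0 : L 0 = A 0 + B 0 + C 0)
    (hs : ∀ i, i ≤ r → L (i + 1) = A (i + 1) + B (i + 1) + C (i + 1) + D i) :
    ∑ i ∈ range (r + 1 + 1), L i
      = ∑ i ∈ range (r + 1 + 1), A i + ∑ i ∈ range (r + 1 + 1), B i
        + ∑ i ∈ range (r + 1 + 1), C i + ∑ i ∈ range (r + 1), D i := by
  have h1 : ∑ i ∈ range (r + 1), L (i + 1)
      = ∑ i ∈ range (r + 1), (A (i + 1) + B (i + 1) + C (i + 1) + D i) :=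
    Finset.sum_congr rfl (fun i hi => hs i (Nat.lt_succ_iff.mp (mem_range.mp hi)))
  rw [Finset.sum_range_succ' L, Finset.sum_range_succ' A, Finset.sum_range_succ' B,
      Finset.sum_range_succ' C, h1, h0,
      Finset.sum_add_distrib, Finset.sum_add_distrib, Finset.sum_add_distrib]
  abel

private lemma Ff_rec (lam kap : k) (m n : ℕ) :
    Ff lam kap (m + 1) (n + 1)
      = Fsh lam kap m (n + 1) + Fsh lam kap (m + 1) n
        + lam • Fsh lam kap m n + kap • Ff lam kap m n := by
  have hA : (∑ r ∈ range (m + 1), ∑ i ∈ range (r + 1),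
        cf lam kap m (n + 1) r i • Finsupp.single (m + (n + 1) - r - i + 1) (1 : k))
      = ∑ r ∈ range (m + 1 + 1), ∑ i ∈ range (r + 1),
          cf lam kap m (n + 1) r i • Finsupp.single (m + (n + 1) - r - i + 1) (1 : k) := by
    rw [Finset.sum_range_succ
      (fun r => ∑ i ∈ range (r + 1),
        cf lam kap m (n + 1) r i • Finsupp.single (m + (n + 1) - r - i + 1) (1 : k)) (m + 1)]
    have hz : (∑ i ∈ range (m + 1 + 1),
        cf lam kap m (n + 1) (m + 1) i • Finsupp.single (m + (n + 1) - (m + 1) - i + 1) (1 : k))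
        = 0 :=
      Finset.sum_eq_zero fun i _ => by
        rw [cf_zero₂ lam kap _ _ (Nat.choose_succ_self m), zero_smul]
    rw [hz, add_zero]
  have hCext : ∀ r : ℕ, (∑ i ∈ range (r + 1),
        cf lam kap m n r i • Finsupp.single (m + n - r - i + 1) (1 : k))
      = ∑ i ∈ range (r + 1 + 1),
          cf lam kap m n r i • Finsupp.single (m + n - r - i + 1) (1 : k) := by
    intro r
    rw [Finset.sum_range_succ
      (fun i => cf lam kap m n r i • Finsupp.single (m + n - r - i + 1) (1 : k)) (r + 1)]
    rw [cf_zero₃ lam kap _ _ (Nat.choose_succ_self r), zero_smul, add_zero]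
  simp only [Ff, Fsh]
  rw [hA, Finset.smul_sum, Finset.smul_sum]
  refine assemble m _ _ _ _ _ ?_ ?_
  · rw [Finset.sum_range_one, Finset.sum_range_one, Finset.sum_range_one,
        show m + 1 + (n + 1) - 0 - 0 = m + n + 2 by omega,
        show m + (n + 1) - 0 - 0 + 1 = m + n + 2 by omega,
        show m + 1 + n - 0 - 0 + 1 = m + n + 2 by omega]
    rw [coeff_id00 lam kap m n, add_smul]
  · intro r hr
    rw [hCext r, Finset.smul_sum, Finset.smul_sum]
    simp only [smul_smul]
    refine assemble2 r _ _ _ _ _ ?_ ?_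
    · rw [show m + 1 + (n + 1) - (r + 1) - 0 = m + n - r + 1 by omega,
          show m + (n + 1) - (r + 1) - 0 + 1 = m + n - r + 1 by omega,
          show m + 1 + n - (r + 1) - 0 + 1 = m + n - r + 1 by omega,
          show m + n - r - 0 + 1 = m + n - r + 1 by omega,
          coeff_id0 lam kap m n r hr, add_smul, add_smul]
    · intro i hi
      rw [show m + 1 + (n + 1) - (r + 1) - (i + 1) = m + n - r - i by omega,
          ha_term lam kap m n r i hr hi, hb_term lam kap m n r i hr hi,
          hc_term lam kap m n r i hr hi,
          coeff_id lam kap m n r i hr hi, add_smul, add_smul, add_smul]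

end QuasiShuffleAux

/-- The product determined by the generalized quasi-shuffle recursion on the free module
`⊕_{n≥0} k e_n` has the explicit formula
`e_m ⋄ e_n = ∑_{r=0}^{min(m,n)} ∑_{i=0}^{r} C(m+n-r,m) C(m,r) C(r,i) lam^{r-i} kap^i e_{m+n-r-i}`. -/
theorem stmt11 {k : Type*} [CommRing k] (lam kap : k)
    (S : (ℕ →₀ k) →ₗ[k] (ℕ →₀ k))
    (hS : ∀ n : ℕ, S (Finsupp.single n 1) = Finsupp.single (n + 1) 1)
    (D : (ℕ →₀ k) →ₗ[k] (ℕ →₀ k) →ₗ[k] (ℕ →₀ k))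
    (h0l : ∀ n : ℕ, D (Finsupp.single 0 1) (Finsupp.single n 1) = Finsupp.single n 1)
    (h0r : ∀ n : ℕ, D (Finsupp.single n 1) (Finsupp.single 0 1) = Finsupp.single n 1)
    (hrec : ∀ m n : ℕ, D (Finsupp.single (m + 1) 1) (Finsupp.single (n + 1) 1)
        = S (D (Finsupp.single m 1) (Finsupp.single (n + 1) 1))
          + S (D (Finsupp.single (m + 1) 1) (Finsupp.single n 1))
          + lam • S (D (Finsupp.single m 1) (Finsupp.single n 1))
          + kap • D (Finsupp.single m 1) (Finsupp.single n 1)) :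
    ∀ m n : ℕ, D (Finsupp.single m 1) (Finsupp.single n 1)
      = ∑ r ∈ Finset.range (min m n + 1), ∑ i ∈ Finset.range (r + 1),
          (((m + n - r).choose m : k) * (m.choose r : k) * (r.choose i : k)
            * lam ^ (r - i) * kap ^ i) • Finsupp.single (m + n - r - i) (1 : k) := by
  have key : ∀ m n : ℕ, D (Finsupp.single m 1) (Finsupp.single n 1) = Ff lam kap m n := by
    intro m
    induction m with
    | zero =>
      intro n
      rw [h0l n, Ff_zero_left]
    | succ m ihm =>
      intro n
      induction n with
      | zero =>
        rw [h0r (m + 1), Ff_zero_right]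
      | succ n ihn =>
        rw [hrec m n, ihm (n + 1), ihm n, ihn,
            S_Ff lam kap S hS m (n + 1), S_Ff lam kap S hS (m + 1) n, S_Ff lam kap S hS m n]
        exact (Ff_rec lam kap m n).symm
  intro m n
  rw [key m n]
  exact (min_sum lam kap m n).symm
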